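/- Let Ω ⊆ ℝⁿ (n ≥ 2) be a nonempty, open, bounded set and let G ⊆ Ω be Lebesgue-measurable with P_Ω(G) < ∞. Let ξ_k ↘ 0 and let φ_k : Ω → ℝ (k = 1, 2, …) be continuously differentiable with x ↦ |∇φ_k(x)|² and x ↦ W(φ_k(x)) Lebesgue integrable on Ω. Assume φ_k → χ_G almost everywhere in Ω and ∫_Ω [(ξ_k/2)|∇φ_k|² + W(φ_k)/ξ_k] dx → P_Ω(G) as k → ∞. Then ∫_Ω √(2 W(φ_k)) |∇φ_k| dx → P_Ω(G) as k → ∞. -/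

import Mathlib

open MeasureTheory Filter Topology RealInnerProductSpace

/-- The quartic double-well potential `W(s) = 18 s² (1-s)²`. -/
noncomputable def W (s : ℝ) : ℝ := 18 * s ^ 2 * (1 - s) ^ 2

/-- Divergence of a vector field on `ℝⁿ`. -/
noncomputable def vdiv {n : ℕ} (g : EuclideanSpace ℝ (Fin n) → EuclideanSpace ℝ (Fin n))
    (x : EuclideanSpace ℝ (Fin n)) : ℝ :=
  ∑ i, fderiv ℝ g x (EuclideanSpace.single i 1) i

/-- The set of numbers `∫_G div g` over admissible test vector fields `g` (C¹, compactly
supported in `Ω`, with `|g| ≤ 1`), whose supremum is the perimeter of `G` in `Ω`. -/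
noncomputable def perimSet {n : ℕ} (Ω G : Set (EuclideanSpace ℝ (Fin n))) : Set ℝ :=
  { r | ∃ g : EuclideanSpace ℝ (Fin n) → EuclideanSpace ℝ (Fin n),
      ContDiff ℝ 1 g ∧ HasCompactSupport g ∧ tsupport g ⊆ Ω ∧
      (∀ x, ‖g x‖ ≤ 1) ∧ r = ∫ x in G, vdiv g x }

/-- The perimeter `P_Ω(G)` of `G` in `Ω`. -/
noncomputable def perim {n : ℕ} (Ω G : Set (EuclideanSpace ℝ (Fin n))) : ℝ :=
  sSup (perimSet Ω G)


section AuxLemmas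
open intervalIntegral Set

noncomputable def Qf (t : ℝ) : ℝ := ∫ s in (0:ℝ)..t, 6 * max 0 (s - s ^ 2)

lemma qcont : Continuous (fun s : ℝ => 6 * max 0 (s - s ^ 2)) :=
  continuous_const.mul (continuous_const.max (by continuity))

lemma qii (a b : ℝ) : IntervalIntegrable (fun s : ℝ => 6 * max 0 (s - s ^ 2)) volume a b :=
  qcont.intervalIntegrable a b

lemma Qf_hasDerivAt (t : ℝ) : HasDerivAt Qf (6 * max 0 (t - t ^ 2)) t :=
  (intervalIntegral.integral_hasStrictDerivAt_right (qii 0 t)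
    (qcont.stronglyMeasurableAtFilter _ _) qcont.continuousAt).hasDerivAt

lemma Qf_zero_of_nonpos {t : ℝ} (ht : t ≤ 0) : Qf t = 0 := by
  have h : Qf t = ∫ s in (0:ℝ)..t, (0:ℝ) := by
    apply intervalIntegral.integral_congr
    intro s hs
    rw [Set.uIcc_of_ge ht] at hs
    have h : s - s ^ 2 ≤ 0 := by nlinarith [hs.1, hs.2]
    simp [max_eq_left h]
  simpa using h

lemma Qf_one : Qf 1 = 1 := by
  have h : Qf 1 = ∫ s in (0:ℝ)..1, (6 * s - 6 * s ^ 2) := by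
    apply intervalIntegral.integral_congr
    intro s hs
    rw [Set.uIcc_of_le zero_le_one] at hs
    have h : 0 ≤ s - s ^ 2 := by nlinarith [hs.1, hs.2]
    simp only [max_eq_right h]; ring
  rw [h, intervalIntegral.integral_sub
    (((by fun_prop : Continuous fun s : ℝ => 6 * s)).intervalIntegrable _ _)
    (((by fun_prop : Continuous fun s : ℝ => 6 * s ^ 2)).intervalIntegrable _ _),
    intervalIntegral.integral_const_mul, intervalIntegral.integral_const_mul]
  norm_num [integral_id, integral_pow]

lemma Qf_mono : Monotone Qf := by
  apply monotone_of_deriv_nonneg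
  · exact fun t => (Qf_hasDerivAt t).differentiableAt
  · intro t; rw [(Qf_hasDerivAt t).deriv]; positivity

lemma Qf_one_of_ge {t : ℝ} (ht : 1 ≤ t) : Qf t = 1 := by
  have h0 : Qf t - Qf 1 = ∫ s in (1:ℝ)..t, 6 * max 0 (s - s ^ 2) := by
    rw [Qf, Qf]
    rw [← intervalIntegral.integral_interval_sub_left (qii 0 t) (qii 0 1)]
  have h2 : (∫ s in (1:ℝ)..t, 6 * max 0 (s - s ^ 2)) = 0 := by
    have h : (∫ s in (1:ℝ)..t, 6 * max 0 (s - s ^ 2)) = ∫ s in (1:ℝ)..t, (0:ℝ) := by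
      apply intervalIntegral.integral_congr
      intro s hs
      rw [Set.uIcc_of_le ht] at hs
      have h : s - s ^ 2 ≤ 0 := by nlinarith [hs.1, hs.2]
      simp [max_eq_left h]
    simpa using h
  rw [h2] at h0
  rw [Qf_one] at h0; linarith

lemma Qf_mem (t : ℝ) : Qf t ∈ Set.Icc (0:ℝ) 1 := by
  constructor
  · rcases le_or_gt t 0 with h | h
    · rw [Qf_zero_of_nonpos h]
    · rw [← Qf_zero_of_nonpos le_rfl]; exact Qf_mono h.le
  · rcases le_or_gt 1 t with h | h
    · rw [Qf_one_of_ge h]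
    · rw [← Qf_one]; exact Qf_mono h.le

lemma Qf_deriv_le (t : ℝ) : |6 * max 0 (t - t ^ 2)| ≤ Real.sqrt (2 * W t) := by
  have h1 : 2 * W t = (6 * (t - t ^ 2)) ^ 2 := by rw [W]; ring
  rw [h1, Real.sqrt_sq_eq_abs, abs_mul, abs_mul]
  have h2 : |max 0 (t - t ^ 2)| = max 0 (t - t ^ 2) := abs_of_nonneg (le_max_left _ _)
  rw [h2]
  have h3 : max 0 (t - t ^ 2) ≤ |t - t ^ 2| := max_le (abs_nonneg _) (le_abs_self _)
  have h6 : |(6:ℝ)| = 6 := by norm_num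
  rw [h6]; linarith

lemma Qf_contDiff : ContDiff ℝ 1 Qf := by
  rw [contDiff_one_iff_deriv]
  refine ⟨fun t => (Qf_hasDerivAt t).differentiableAt, ?_⟩
  have h : deriv Qf = fun t => 6 * max 0 (t - t ^ 2) := funext fun t => (Qf_hasDerivAt t).deriv
  rw [h]; exact qcont

lemma euclid_abs_le_norm {n : ℕ} (x : EuclideanSpace ℝ (Fin n)) (i : Fin n) :
    |x i| ≤ ‖x‖ := by
  rw [EuclideanSpace.norm_eq]
  rw [show |x i| = Real.sqrt (|x i| ^ 2) by rw [Real.sqrt_sq_eq_abs, abs_abs]]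
  apply Real.sqrt_le_sqrt
  exact Finset.single_le_sum (f := fun j => |x j| ^ 2) (fun j _ => by positivity)
    (Finset.mem_univ i)

lemma euclid_sum_single {n : ℕ} (x : EuclideanSpace ℝ (Fin n)) :
    ∑ i, x i • EuclideanSpace.single i (1:ℝ) = x := by
  ext j
  rw [show (∑ i, x i • EuclideanSpace.single i (1:ℝ)) j
      = ∑ i, (x i • EuclideanSpace.single i (1:ℝ)) j from by
    rw [WithLp.ofLp_sum, Finset.sum_apply]]
  simp [EuclideanSpace.single_apply]

/-- Divergence theorem for compactly supported, everywhere differentiable vector fields. -/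
lemma integral_div_eq_zero {m : ℕ}
    (F : EuclideanSpace ℝ (Fin (m+1)) → EuclideanSpace ℝ (Fin (m+1)))
    (F' : EuclideanSpace ℝ (Fin (m+1)) →
      (EuclideanSpace ℝ (Fin (m+1)) →L[ℝ] EuclideanSpace ℝ (Fin (m+1))))
    (hd : ∀ x, HasFDerivAt F (F' x) x)
    {R : ℝ} (hR : 0 < R) (hsupp : ∀ x, R < ‖x‖ → F x = 0)
    (hsupp' : ∀ x, R < ‖x‖ → F' x = 0)
    (hi : Integrable (fun x => ∑ i, F' x (EuclideanSpace.single i 1) i)) :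
    ∫ x, ∑ i, F' x (EuclideanSpace.single i 1) i = 0 := by
  have eL := (MeasurableEquiv.toLp 2 (Fin (m+1) → ℝ)).symm
  let a : Fin (m+1) → ℝ := fun _ => -(R+1)
  let b : Fin (m+1) → ℝ := fun _ => (R+1)
  have hle : a ≤ b := fun i => by show -(R+1) ≤ R+1; linarith
  let cE : EuclideanSpace ℝ (Fin (m+1)) →L[ℝ] (Fin (m+1) → ℝ) :=
    (EuclideanSpace.equiv (Fin (m+1)) ℝ).toContinuousLinearMap
  let cE' : (Fin (m+1) → ℝ) →L[ℝ] EuclideanSpace ℝ (Fin (m+1)) :=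
    (EuclideanSpace.equiv (Fin (m+1)) ℝ).symm.toContinuousLinearMap
  let f : (Fin (m+1) → ℝ) → (Fin (m+1) → ℝ) := cE ∘ F ∘ cE'
  let f' : (Fin (m+1) → ℝ) → ((Fin (m+1) → ℝ) →L[ℝ] (Fin (m+1) → ℝ)) := fun y =>
    cE.comp ((F' (cE' y)).comp cE')
  have hdf : ∀ y, HasFDerivAt f (f' y) y := fun y =>
    (cE.hasFDerivAt).comp _ ((hd (cE' y)).comp y cE'.hasFDerivAt)
  -- divergence identification
  have hdiv : ∀ y, (∑ i, f' y (Pi.single i 1) i) =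
      ∑ i, F' (cE' y) (EuclideanSpace.single i 1) i := by
    intro y; rfl
  -- norm bound outside the box
  have hnorm : ∀ y : Fin (m+1) → ℝ, y ∉ Icc a b → R < ‖cE' y‖ := by
    intro y hy
    have hex : ∃ i, R + 1 ≤ |y i| := by
      by_contra hc; push_neg at hc
      refine hy ⟨fun i => ?_, fun i => ?_⟩
      · have := hc i; rw [abs_lt] at this
        show -(R+1) ≤ y i; linarith [this.1]
      · have := hc i; rw [abs_lt] at this
        show y i ≤ R+1; linarith [this.2]
    obtain ⟨i, hi'⟩ := hex
    calc R < |y i| := by linarith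
      _ = |(cE' y) i| := rfl
      _ ≤ ‖cE' y‖ := euclid_abs_le_norm _ i
  have hcontf : Continuous f :=
    continuous_iff_continuousAt.mpr fun y => (hdf y).continuousAt
  have hIi : Integrable (fun y => ∑ i, f' y (Pi.single i 1) i) := by
    have h1 : MeasurePreserving ((MeasurableEquiv.toLp 2 (Fin (m+1) → ℝ)).symm).symm volume volume :=
      (EuclideanSpace.volume_preserving_symm_measurableEquiv_toLp (Fin (m+1))).symm
    exact (h1.integrable_comp_emb
      ((MeasurableEquiv.toLp 2 (Fin (m+1) → ℝ)).symm).symm.measurableEmbedding).mpr hi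
  have key := MeasureTheory.integral_divergence_of_hasFDerivAt_off_countable a b hle f f'
    ∅ Set.countable_empty hcontf.continuousOn
    (fun y _ => hdf y) hIi.integrableOn
  -- each face integral vanishes
  have hface : ∀ (i : Fin (m+1)) (c : ℝ), R < |c| →
      ∀ x : Fin m → ℝ, f (Fin.insertNth i c x) i = 0 := by
    intro i c hc x
    have h1 : R < ‖cE' (Fin.insertNth i c x)‖ := by
      calc R < |c| := hc
        _ = |(cE' (Fin.insertNth i c x)) i| := by
              congr 1
              exact (Fin.insertNth_apply_same (α := fun _ => ℝ) i c x).symm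
        _ ≤ _ := euclid_abs_le_norm _ i
    show (cE (F (cE' (Fin.insertNth i c x)))) i = 0
    rw [hsupp _ h1]
    rfl
  have hrhs : ∑ i : Fin (m+1),
      ((∫ x in Icc (a ∘ Fin.succAbove i) (b ∘ Fin.succAbove i), f (Fin.insertNth i (b i) x) i) -
       (∫ x in Icc (a ∘ Fin.succAbove i) (b ∘ Fin.succAbove i), f (Fin.insertNth i (a i) x) i)) = 0 := by
    apply Finset.sum_eq_zero
    intro i _
    have h1 : ∀ x : Fin m → ℝ, f (Fin.insertNth i (b i) x) i = 0 :=
      hface i (b i) (by show R < |R+1|; rw [abs_of_pos (by linarith)]; linarith)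
    have h2 : ∀ x : Fin m → ℝ, f (Fin.insertNth i (a i) x) i = 0 :=
      hface i (a i) (by show R < |-(R+1)|; rw [abs_neg, abs_of_pos (by linarith)]; linarith)
    simp [h1, h2]
  have hlhs : (∫ y in Icc a b, ∑ i, f' y (Pi.single i 1) i)
      = ∫ y, ∑ i, f' y (Pi.single i 1) i := by
    apply MeasureTheory.setIntegral_eq_integral_of_forall_compl_eq_zero
    intro y hy
    have h1 := hsupp' _ (hnorm y hy)
    show ∑ i, (cE.comp ((F' (cE' y)).comp cE')) (Pi.single i 1) i = 0
    rw [h1]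
    simp
  have htrans : (∫ y, ∑ i, f' y (Pi.single i 1) i)
      = ∫ x, ∑ i, F' x (EuclideanSpace.single i 1) i := by
    have h1 : MeasurePreserving ((MeasurableEquiv.toLp 2 (Fin (m+1) → ℝ)).symm) volume volume :=
      EuclideanSpace.volume_preserving_symm_measurableEquiv_toLp (Fin (m+1))
    rw [← h1.integral_comp ((MeasurableEquiv.toLp 2 (Fin (m+1) → ℝ)).symm).measurableEmbedding]
    rfl
  rw [← htrans, ← hlhs, key, hrhs]

lemma W_nonneg (s : ℝ) : 0 ≤ W s := by rw [W]; positivity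

lemma W_continuous : Continuous W := by
  rw [show W = fun s => 18 * s ^ 2 * (1 - s) ^ 2 from rfl]
  fun_prop

lemma amgm_W {ξ w t : ℝ} (hξ : 0 < ξ) (hw : 0 ≤ w) (ht : 0 ≤ t) :
    Real.sqrt (2 * w) * t ≤ ξ / 2 * t ^ 2 + w / ξ := by
  have h1 : Real.sqrt (2 * w) ^ 2 = 2 * w := Real.sq_sqrt (by linarith)
  rw [← sub_nonneg]
  have h2 : ξ * (w / ξ) = w := by field_simp
  have h3 : 0 ≤ ξ * (ξ / 2 * t ^ 2 + w / ξ - Real.sqrt (2 * w) * t) := by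
    nlinarith [sq_nonneg (Real.sqrt (2 * w) - ξ * t), Real.sqrt_nonneg (2 * w)]
  exact (mul_nonneg_iff_of_pos_left hξ).mp h3

lemma clm_sum_single {n : ℕ} (A : EuclideanSpace ℝ (Fin n) →L[ℝ] ℝ)
    (v : EuclideanSpace ℝ (Fin n)) :
    ∑ i, A (EuclideanSpace.single i 1) * v i = A v := by
  calc ∑ i, A (EuclideanSpace.single i 1) * v i
      = ∑ i, A (v i • EuclideanSpace.single i 1) := by
        refine Finset.sum_congr rfl fun i _ => ?_
        rw [A.map_smul, smul_eq_mul, mul_comm]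
    _ = A (∑ i, v i • EuclideanSpace.single i 1) := (map_sum A _ _).symm
    _ = A v := by rw [euclid_sum_single]

lemma zero_mem_perimSet {n : ℕ} (Ω G : Set (EuclideanSpace ℝ (Fin n))) :
    (0:ℝ) ∈ perimSet Ω G := by
  refine ⟨fun _ => 0, contDiff_const, ?_, ?_, fun x => by simp, ?_⟩
  · rw [HasCompactSupport]
    have h : tsupport (fun _ : EuclideanSpace ℝ (Fin n) =>
        (0 : EuclideanSpace ℝ (Fin n))) = ∅ := by
      rw [tsupport, Function.support_fun_zero, closure_empty]
    rw [h]; exact isCompact_empty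
  · rw [tsupport, Function.support_fun_zero, closure_empty]; exact Set.empty_subset _
  · have h : ∀ x, vdiv (fun _ : EuclideanSpace ℝ (Fin n) =>
        (0 : EuclideanSpace ℝ (Fin n))) x = 0 := by
      intro x; rw [vdiv]
      simp [fderiv_const]
    simp [h]

lemma div_smul_eq {n : ℕ} (c : ℝ) (A : EuclideanSpace ℝ (Fin n) →L[ℝ] ℝ)
    (Dg : EuclideanSpace ℝ (Fin n) →L[ℝ] EuclideanSpace ℝ (Fin n))
    (v : EuclideanSpace ℝ (Fin n)) :
    ∑ i, (c • Dg + A.smulRight v) (EuclideanSpace.single i 1) i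
      = A v + c * ∑ i, Dg (EuclideanSpace.single i 1) i := by
  have h : ∀ i, (c • Dg + A.smulRight v) (EuclideanSpace.single i 1) i
      = c * Dg (EuclideanSpace.single i 1) i + A (EuclideanSpace.single i 1) * v i := by
    intro i
    rw [ContinuousLinearMap.add_apply, ContinuousLinearMap.smulRight_apply]
    simp [PiLp.add_apply, PiLp.smul_apply, smul_eq_mul]
  rw [Finset.sum_congr rfl fun i _ => h i, Finset.sum_add_distrib, ← Finset.mul_sum,
    clm_sum_single]
  ring

end AuxLemmas

set_option maxHeartbeats 1000000 in
theorem sqrt_energy_tendsto_perimeter {n : ℕ} (hn : 2 ≤ n)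
    (Ω : Set (EuclideanSpace ℝ (Fin n))) (hΩne : Ω.Nonempty) (hΩopen : IsOpen Ω)
    (hΩbdd : Bornology.IsBounded Ω)
    (G : Set (EuclideanSpace ℝ (Fin n))) (hGmeas : MeasurableSet G) (hGΩ : G ⊆ Ω)
    (hPfin : BddAbove (perimSet Ω G))
    (ξ : ℕ → ℝ) (hξpos : ∀ k, 0 < ξ k) (hξanti : StrictAnti ξ)
    (hξ0 : Tendsto ξ atTop (𝓝 0))
    (φ : ℕ → EuclideanSpace ℝ (Fin n) → ℝ)
    (hφ : ∀ k, ContDiffOn ℝ 1 (φ k) Ω)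
    (hgradInt : ∀ k, IntegrableOn (fun x => ‖gradient (φ k) x‖ ^ 2) Ω)
    (hWInt : ∀ k, IntegrableOn (fun x => W (φ k x)) Ω)
    (hae : ∀ᵐ x ∂(volume.restrict Ω),
      Tendsto (fun k => φ k x) atTop (𝓝 (G.indicator (fun _ => (1 : ℝ)) x)))
    (henergy : Tendsto
      (fun k => ∫ x in Ω, (ξ k / 2 * ‖gradient (φ k) x‖ ^ 2 + W (φ k x) / ξ k))
      atTop (𝓝 (perim Ω G))) :
    Tendsto (fun k => ∫ x in Ω, Real.sqrt (2 * W (φ k x)) * ‖gradient (φ k) x‖)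
      atTop (𝓝 (perim Ω G)) := by
  classical
  obtain ⟨m, rfl⟩ : ∃ m, n = m + 1 := ⟨n - 1, by omega⟩
  set P := perim Ω G with hPdef
  set a : ℕ → ℝ := fun k => ∫ x in Ω, Real.sqrt (2 * W (φ k x)) * ‖gradient (φ k) x‖ with hadef
  set Ek : ℕ → ℝ := fun k =>
    ∫ x in Ω, (ξ k / 2 * ‖gradient (φ k) x‖ ^ 2 + W (φ k x) / ξ k) with hEdef
  -- basic continuity facts
  have hφcont : ∀ k, ContinuousOn (φ k) Ω := fun k => (hφ k).continuousOn
  have hφdiff : ∀ k, ∀ x ∈ Ω, HasFDerivAt (φ k) (fderiv ℝ (φ k) x) x := fun k x hx =>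
    (((hφ k).contDiffAt (hΩopen.mem_nhds hx)).differentiableAt one_ne_zero).hasFDerivAt
  have hfd_cont : ∀ k, ContinuousOn (fun x => fderiv ℝ (φ k) x) Ω := fun k =>
    (hφ k).continuousOn_fderiv_of_isOpen hΩopen le_rfl
  have hgradnorm : ∀ k x, ‖gradient (φ k) x‖ = ‖fderiv ℝ (φ k) x‖ := by
    intro k x
    rw [gradient]
    exact LinearIsometryEquiv.norm_map _ _
  have hgradcont : ∀ k, ContinuousOn (fun x => ‖gradient (φ k) x‖) Ω := by
    intro k
    have h := (hfd_cont k).norm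
    refine h.congr fun x hx => ?_
    rw [hgradnorm]
  -- integrability of the energy integrand and the target integrand
  have hEint : ∀ k, IntegrableOn
      (fun x => ξ k / 2 * ‖gradient (φ k) x‖ ^ 2 + W (φ k x) / ξ k) Ω :=
    fun k => ((hgradInt k).const_mul _).add ((hWInt k).div_const _)
  have hptle : ∀ k x, Real.sqrt (2 * W (φ k x)) * ‖gradient (φ k) x‖ ≤
      ξ k / 2 * ‖gradient (φ k) x‖ ^ 2 + W (φ k x) / ξ k := fun k x =>
    amgm_W (hξpos k) (W_nonneg _) (norm_nonneg _)
  have hameas : ∀ k, AEStronglyMeasurable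
      (fun x => Real.sqrt (2 * W (φ k x)) * ‖gradient (φ k) x‖) (volume.restrict Ω) := by
    intro k
    refine ContinuousOn.aestronglyMeasurable ?_ hΩopen.measurableSet
    exact ((Real.continuous_sqrt.comp (continuous_const.mul W_continuous)).comp_continuousOn
      (hφcont k)).mul (hgradcont k)
  have haint : ∀ k, IntegrableOn
      (fun x => Real.sqrt (2 * W (φ k x)) * ‖gradient (φ k) x‖) Ω := by
    intro k
    refine Integrable.mono' (hEint k) (hameas k) (Filter.Eventually.of_forall fun x => ?_)
    rw [Real.norm_eq_abs, abs_of_nonneg (by positivity)]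
    exact hptle k x
  have h_ak_nonneg : ∀ k, 0 ≤ a k := fun k =>
    setIntegral_nonneg hΩopen.measurableSet fun x _ => by positivity
  have h_a_le_E : ∀ k, a k ≤ Ek k := fun k =>
    setIntegral_mono_on (haint k) (hEint k) hΩopen.measurableSet fun x _ => hptle k x
  -- boundedness of the sequences
  have hbdd_below : IsBoundedUnder (· ≥ ·) atTop a := isBoundedUnder_of ⟨0, h_ak_nonneg⟩
  have hbdd_above : IsBoundedUnder (· ≤ ·) atTop a := by
    obtain ⟨C, hC⟩ := henergy.isBoundedUnder_le
    refine ⟨C, ?_⟩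
    rw [Filter.eventually_map] at hC ⊢
    filter_upwards [hC] with k hk
    exact le_trans (h_a_le_E k) hk
  -- upper bound
  have hupper : Filter.limsup a atTop ≤ P := by
    have h1 : Filter.limsup Ek atTop = P := henergy.limsup_eq
    rw [← h1]
    refine Filter.limsup_le_limsup (Filter.Eventually.of_forall h_a_le_E) ?_ ?_
    · exact hbdd_below.isCoboundedUnder_le
    · exact henergy.isBoundedUnder_le
  -- lower bound
  have hlower : ∀ r ∈ perimSet Ω G, r ≤ Filter.liminf a atTop := by
    rintro r ⟨g, hg1, hg2, hg3, hg4, rfl⟩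
    -- facts about g
    have hgcont : Continuous g := hg1.continuous
    have hgdiff : ∀ x, HasFDerivAt g (fderiv ℝ g x) x := fun x =>
      (hg1.differentiable one_ne_zero x).hasFDerivAt
    have hfdg_cont : Continuous fun x => fderiv ℝ g x := hg1.continuous_fderiv one_ne_zero
    have hvdivg_cont : Continuous (vdiv g) := by
      rw [show vdiv g = fun x => ∑ i, fderiv ℝ g x (EuclideanSpace.single i 1) i from rfl]
      refine continuous_finset_sum _ fun i _ => ?_
      exact (EuclideanSpace.proj i).continuous.comp
        ((ContinuousLinearMap.apply ℝ _ (EuclideanSpace.single i 1)).continuous.comp hfdg_cont)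
    have hvdivg_supp : HasCompactSupport (vdiv g) := by
      have h := hg2.fderiv (𝕜 := ℝ)
      exact h.comp_left
        (g := fun L : _ →L[ℝ] EuclideanSpace ℝ (Fin (m+1)) =>
          ∑ i, L (EuclideanSpace.single i 1) i) (by simp)
    have hvdivg_int : Integrable (vdiv g) :=
      hvdivg_cont.integrable_of_hasCompactSupport hvdivg_supp
    have hg_zero : ∀ x ∉ tsupport g, g x = 0 := fun x hx => image_eq_zero_of_notMem_tsupport hx
    have hfdg_zero : ∀ x ∉ tsupport g, fderiv ℝ g x = 0 := by
      intro x hx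
      by_contra h
      exact hx (support_fderiv_subset ℝ (Function.mem_support.mpr h))
    -- the composed profile
    have hψ01 : ∀ k x, Qf (φ k x) ∈ Set.Icc (0:ℝ) 1 := fun k x => Qf_mem _
    have hψcont : ∀ k, ContinuousOn (fun x => Qf (φ k x)) Ω := fun k =>
      Qf_contDiff.continuous.comp_continuousOn (hφcont k)
    have hψdiff : ∀ k, ∀ x ∈ Ω, HasFDerivAt (fun x => Qf (φ k x))
        ((6 * max 0 (φ k x - φ k x ^ 2)) • fderiv ℝ (φ k) x) x := fun k x hx =>
      (Qf_hasDerivAt (φ k x)).comp_hasFDerivAt x (hφdiff k x hx)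
    set b : ℕ → ℝ := fun k => ∫ x in Ω, Qf (φ k x) * vdiv g x with hbdef
    -- integrability of the two parts
    have h1int : ∀ k, IntegrableOn (fun x => Qf (φ k x) * vdiv g x) Ω := by
      intro k
      refine Integrable.mono' hvdivg_int.norm.integrableOn
        (((hψcont k).mul hvdivg_cont.continuousOn).aestronglyMeasurable hΩopen.measurableSet)
        (Filter.Eventually.of_forall fun x => ?_)
      rw [Real.norm_eq_abs, abs_mul, Real.norm_eq_abs]
      have h01 := hψ01 k x
      have hle1 : |Qf (φ k x)| ≤ 1 := abs_le.mpr ⟨by linarith [h01.1], h01.2⟩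
      nlinarith [abs_nonneg (vdiv g x)]
    have hptbd : ∀ k x, ‖(6 * max 0 (φ k x - φ k x ^ 2)) * (fderiv ℝ (φ k) x (g x))‖ ≤
        Real.sqrt (2 * W (φ k x)) * ‖gradient (φ k) x‖ := by
      intro k x
      rw [Real.norm_eq_abs, abs_mul]
      have e1 : |6 * max 0 (φ k x - φ k x ^ 2)| ≤ Real.sqrt (2 * W (φ k x)) := Qf_deriv_le _
      have e2 : |fderiv ℝ (φ k) x (g x)| ≤ ‖gradient (φ k) x‖ := by
        rw [hgradnorm]
        calc |fderiv ℝ (φ k) x (g x)| = ‖fderiv ℝ (φ k) x (g x)‖ := rfl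
          _ ≤ ‖fderiv ℝ (φ k) x‖ * ‖g x‖ := (fderiv ℝ (φ k) x).le_opNorm (g x)
          _ ≤ ‖fderiv ℝ (φ k) x‖ * 1 :=
              mul_le_mul_of_nonneg_left (hg4 x) (norm_nonneg _)
          _ = ‖fderiv ℝ (φ k) x‖ := mul_one _
      have e3 : (0:ℝ) ≤ |6 * max 0 (φ k x - φ k x ^ 2)| := abs_nonneg _
      have e4 : (0:ℝ) ≤ |fderiv ℝ (φ k) x (g x)| := abs_nonneg _
      nlinarith
    have h2int : ∀ k, IntegrableOn
        (fun x => (6 * max 0 (φ k x - φ k x ^ 2)) * (fderiv ℝ (φ k) x (g x))) Ω := by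
      intro k
      refine Integrable.mono' (hEint k) ?_ (Filter.Eventually.of_forall fun x => ?_)
      · refine ContinuousOn.aestronglyMeasurable (ContinuousOn.mul ?_ ?_) hΩopen.measurableSet
        · exact (qcont.comp_continuousOn (hφcont k))
        · exact ContinuousOn.clm_apply (hfd_cont k) hgcont.continuousOn
      · exact le_trans (hptbd k x) (hptle k x)
    -- integration by parts via the divergence theorem
    have hparts : ∀ k, b k =
        - ∫ x in Ω, (6 * max 0 (φ k x - φ k x ^ 2)) * (fderiv ℝ (φ k) x (g x)) := by
      intro k
      obtain ⟨R0, hR0⟩ := hg2.isBounded.subset_closedBall 0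
      have hnotsupp : ∀ x : EuclideanSpace ℝ (Fin (m+1)), max R0 1 < ‖x‖ → x ∉ tsupport g := by
        intro x hx hmem
        have h := hR0 hmem
        rw [Metric.mem_closedBall, dist_zero_right] at h
        have := le_max_left R0 1
        linarith
      have hd : ∀ x, HasFDerivAt (fun x => Qf (φ k x) • g x)
          ((if x ∈ Ω then Qf (φ k x) • fderiv ℝ g x +
            ((6 * max 0 (φ k x - φ k x ^ 2)) • fderiv ℝ (φ k) x).smulRight (g x) else 0)) x := by
        intro x
        by_cases hx : x ∈ Ω
        · rw [if_pos hx]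
          exact (hψdiff k x hx).smul (hgdiff x)
        · rw [if_neg hx]
          have hx' : x ∉ tsupport g := fun h => hx (hg3 h)
          have hev : (fun y => Qf (φ k y) • g y) =ᶠ[𝓝 x]
              (fun _ => (0 : EuclideanSpace ℝ (Fin (m+1)))) := by
            filter_upwards [(isClosed_tsupport g).isOpen_compl.mem_nhds hx'] with y hy
            rw [hg_zero y hy, smul_zero]
          exact (hasFDerivAt_const (0 : EuclideanSpace ℝ (Fin (m+1))) x).congr_of_eventuallyEq hev
      have hsupp : ∀ x : EuclideanSpace ℝ (Fin (m+1)), max R0 1 < ‖x‖ →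
          Qf (φ k x) • g x = 0 := by
        intro x hx
        rw [hg_zero x (hnotsupp x hx), smul_zero]
      have hsupp' : ∀ x : EuclideanSpace ℝ (Fin (m+1)), max R0 1 < ‖x‖ →
          (if x ∈ Ω then Qf (φ k x) • fderiv ℝ g x +
            ((6 * max 0 (φ k x - φ k x ^ 2)) • fderiv ℝ (φ k) x).smulRight (g x) else 0) = 0 := by
        intro x hx
        by_cases hxΩ : x ∈ Ω
        · rw [if_pos hxΩ, hg_zero x (hnotsupp x hx), hfdg_zero x (hnotsupp x hx)]
          ext v
          simp [ContinuousLinearMap.smulRight_apply]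
        · rw [if_neg hxΩ]
      have hdivF : ∀ x : EuclideanSpace ℝ (Fin (m+1)),
          (∑ i, (if x ∈ Ω then Qf (φ k x) • fderiv ℝ g x +
            ((6 * max 0 (φ k x - φ k x ^ 2)) • fderiv ℝ (φ k) x).smulRight (g x) else 0)
              (EuclideanSpace.single i 1) i)
          = Set.indicator Ω (fun x =>
              ((6 * max 0 (φ k x - φ k x ^ 2)) • fderiv ℝ (φ k) x) (g x)
                + Qf (φ k x) * vdiv g x) x := by
        intro x
        by_cases hx : x ∈ Ω
        · rw [if_pos hx, Set.indicator_of_mem hx, div_smul_eq]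
          rfl
        · rw [if_neg hx, Set.indicator_of_notMem hx]
          simp
      have hsmul_apply : ∀ x,
          ((6 * max 0 (φ k x - φ k x ^ 2)) • fderiv ℝ (φ k) x) (g x)
            = (6 * max 0 (φ k x - φ k x ^ 2)) * (fderiv ℝ (φ k) x (g x)) := fun x => rfl
      have h12int : IntegrableOn (fun x =>
          ((6 * max 0 (φ k x - φ k x ^ 2)) • fderiv ℝ (φ k) x) (g x)
            + Qf (φ k x) * vdiv g x) Ω := by
        refine Integrable.add ?_ (h1int k)
        have := h2int k
        refine this.congr_fun ?_ hΩopen.measurableSet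
        intro x _
        exact (hsmul_apply x).symm
      have hi : Integrable (fun x : EuclideanSpace ℝ (Fin (m+1)) =>
          ∑ i, (if x ∈ Ω then Qf (φ k x) • fderiv ℝ g x +
            ((6 * max 0 (φ k x - φ k x ^ 2)) • fderiv ℝ (φ k) x).smulRight (g x) else 0)
              (EuclideanSpace.single i 1) i) := by
        rw [funext hdivF, integrable_indicator_iff hΩopen.measurableSet]
        exact h12int
      have key0 := integral_div_eq_zero (fun x => Qf (φ k x) • g x) _ hd
        (lt_of_lt_of_le zero_lt_one (le_max_right R0 1)) hsupp hsupp' hi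
      rw [funext hdivF, integral_indicator hΩopen.measurableSet] at key0
      have hsplit := integral_add
        (((h2int k).congr_fun (fun x _ => (hsmul_apply x).symm) hΩopen.measurableSet))
        (h1int k)
      rw [hsplit] at key0
      have hcongr : (∫ x in Ω, ((6 * max 0 (φ k x - φ k x ^ 2)) • fderiv ℝ (φ k) x) (g x))
          = ∫ x in Ω, (6 * max 0 (φ k x - φ k x ^ 2)) * (fderiv ℝ (φ k) x (g x)) := by
        refine setIntegral_congr_fun hΩopen.measurableSet fun x _ => hsmul_apply x
      rw [hcongr] at key0
      rw [hbdef]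
      linarith
    -- b k ≤ a k
    have hb_le : ∀ k, b k ≤ a k := by
      intro k
      rw [hparts k]
      have h1 : |∫ x in Ω, (6 * max 0 (φ k x - φ k x ^ 2)) * (fderiv ℝ (φ k) x (g x))| ≤
          ∫ x in Ω, ‖(6 * max 0 (φ k x - φ k x ^ 2)) * (fderiv ℝ (φ k) x (g x))‖ := by
        rw [← Real.norm_eq_abs]
        exact norm_integral_le_integral_norm _
      have h2 : (∫ x in Ω, ‖(6 * max 0 (φ k x - φ k x ^ 2)) * (fderiv ℝ (φ k) x (g x))‖) ≤ a k := by
        refine setIntegral_mono_on (h2int k).norm (haint k) hΩopen.measurableSet fun x _ =>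
          hptbd k x
      calc - ∫ x in Ω, (6 * max 0 (φ k x - φ k x ^ 2)) * (fderiv ℝ (φ k) x (g x))
          ≤ |∫ x in Ω, (6 * max 0 (φ k x - φ k x ^ 2)) * (fderiv ℝ (φ k) x (g x))| :=
            neg_le_abs _
        _ ≤ a k := le_trans h1 h2
    -- dominated convergence
    have hbtend : Tendsto b atTop (𝓝 (∫ x in G, vdiv g x)) := by
      have hlim : ∀ᵐ x ∂(volume.restrict Ω), Tendsto (fun k => Qf (φ k x) * vdiv g x)
          atTop (𝓝 (G.indicator (fun _ => (1:ℝ)) x * vdiv g x)) := by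
        filter_upwards [hae] with x hx
        have h1 : Tendsto (fun k => Qf (φ k x)) atTop
            (𝓝 (Qf (G.indicator (fun _ => (1:ℝ)) x))) :=
          (Qf_contDiff.continuous.tendsto _).comp hx
        have h2 : Qf (G.indicator (fun _ => (1:ℝ)) x) = G.indicator (fun _ => (1:ℝ)) x := by
          by_cases hxG : x ∈ G
          · rw [Set.indicator_of_mem hxG, Qf_one]
          · rw [Set.indicator_of_notMem hxG, Qf_zero_of_nonpos le_rfl]
        rw [h2] at h1
        exact h1.mul_const _
      have hDCT := MeasureTheory.tendsto_integral_of_dominated_convergence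
        (μ := volume.restrict Ω)
        (F := fun k x => Qf (φ k x) * vdiv g x)
        (f := fun x => G.indicator (fun _ => (1:ℝ)) x * vdiv g x)
        (bound := fun x => ‖vdiv g x‖)
        (fun k => ((hψcont k).mul hvdivg_cont.continuousOn).aestronglyMeasurable
          hΩopen.measurableSet)
        hvdivg_int.norm.integrableOn
        (fun k => Filter.Eventually.of_forall fun x => by
          show ‖Qf (φ k x) * vdiv g x‖ ≤ ‖vdiv g x‖
          rw [Real.norm_eq_abs, abs_mul, Real.norm_eq_abs]
          have h01 := hψ01 k x
          have hle1 : |Qf (φ k x)| ≤ 1 := abs_le.mpr ⟨by linarith [h01.1], h01.2⟩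
          nlinarith [abs_nonneg (vdiv g x)])
        hlim
      have hlimval : (∫ x in Ω, G.indicator (fun _ => (1:ℝ)) x * vdiv g x)
          = ∫ x in G, vdiv g x := by
        have heq : (fun x => G.indicator (fun _ => (1:ℝ)) x * vdiv g x)
            = G.indicator (fun x => vdiv g x) := by
          funext x
          by_cases hxG : x ∈ G
          · rw [Set.indicator_of_mem hxG, Set.indicator_of_mem hxG, one_mul]
          · rw [Set.indicator_of_notMem hxG, Set.indicator_of_notMem hxG, zero_mul]
        rw [heq, setIntegral_indicator hGmeas, Set.inter_eq_self_of_subset_right hGΩ]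
      rw [hlimval] at hDCT
      exact hDCT
    have hblim : Filter.liminf b atTop = ∫ x in G, vdiv g x := hbtend.liminf_eq
    rw [← hblim]
    refine Filter.liminf_le_liminf (Filter.Eventually.of_forall hb_le) ?_ ?_
    · exact hbtend.isBoundedUnder_ge
    · exact hbdd_above.isCoboundedUnder_ge
  have hPle : P ≤ Filter.liminf a atTop :=
    csSup_le ⟨0, zero_mem_perimSet Ω G⟩ hlower
  exact tendsto_of_le_liminf_of_limsup_le hPle hupper hbdd_above hbdd_below
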